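/- If (w/2)·log₂(1 + a·P₁) + (λ_s+λ_t)·P₂ ≥ (w/2)·log₂(1 + c·P₂), where P₁ ≤ min(P_s,P_t) and P₂ = max(w/(α(λ_s+λ_t)) − 1/c, 0), with α = 2 ln 2, then 4 + 4a·min(P_s,P_t) ≥ w·c/(α(λ_s+λ_t)), and consequently λ_s + λ_t ≥ w·c/(4α·(a·min(P_s,P_t) + 1)). -/

import Mathlib

theorem stmt_12 (w a c Ps Pt lamS lamT P₁ P₂ : ℝ)
    (hw : 0 < w) (ha : 0 < a) (hc : 0 < c)
    (hlamS : 0 ≤ lamS) (hlamT : 0 ≤ lamT) (hst : 0 < lamS + lamT)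
    (hPs : 0 < Ps) (hPt : 0 < Pt)
    (α : ℝ) (hα : α = 2 * Real.log 2)
    (hP₁ : 0 ≤ P₁) (hP₁' : P₁ ≤ min Ps Pt)
    (hP₂ : P₂ = max (w / (α * (lamS + lamT)) - 1 / c) 0)
    (h : (w / 2) * (Real.log (1 + c * P₂) / Real.log 2) ≤
         (w / 2) * (Real.log (1 + a * P₁) / Real.log 2) + (lamS + lamT) * P₂) :
    4 + 4 * a * min Ps Pt ≥ w * c / (α * (lamS + lamT)) ∧
    lamS + lamT ≥ w * c / (4 * α * (a * min Ps Pt + 1)) := by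
  set L := lamS + lamT with hL
  have hlog2 : 0 < Real.log 2 := Real.log_pos (by norm_num)
  have hαpos : 0 < α := by rw [hα]; linarith
  have hm : 0 < min Ps Pt := lt_min hPs hPt
  have hαL : 0 < α * L := mul_pos hαpos hst
  -- main claim
  have key : w * c / (α * L) ≤ 4 + 4 * a * min Ps Pt := by
    rcases le_or_gt (w / (α * L) - 1 / c) 0 with hle | hgt
    · have h1 : w / (α * L) ≤ 1 / c := by linarith
      have h2 : w * c / (α * L) ≤ 1 := by
        rw [div_le_one hαL]
        have := (div_le_div_iff₀ hαL hc).mp h1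
        linarith
      nlinarith [mul_pos ha hm]
    · have hP₂' : P₂ = w / (α * L) - 1 / c := by
        rw [hP₂, max_eq_left hgt.le]
      have hP₂pos : 0 < P₂ := by rw [hP₂']; exact hgt
      have hcP₂ : 1 + c * P₂ = w * c / (α * L) := by
        rw [hP₂']; field_simp; ring
      -- L * P₂ ≤ w / α
      have hLP : L * P₂ ≤ w / α := by
        rw [hP₂']
        have : L * (w / (α * L)) = w / α := by field_simp
        have h1c : 0 < 1 / c := by positivity
        nlinarith [mul_pos hst h1c]
      -- derive log inequality
      have hlogineq : Real.log (1 + c * P₂) ≤ Real.log (1 + a * P₁) + 1 := by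
        have hw' : (w / 2) * (Real.log (1 + c * P₂) / Real.log 2) ≤
            (w / 2) * (Real.log (1 + a * P₁) / Real.log 2) + w / (2 * Real.log 2) := by
          have : L * P₂ ≤ w / (2 * Real.log 2) := by rw [← hα] at *; exact hLP
          linarith
        have hA := Real.log (1 + c * P₂)
        have h2 : w * Real.log (1 + c * P₂) ≤ w * Real.log (1 + a * P₁) + w := by
          have e1 : (w / 2) * (Real.log (1 + c * P₂) / Real.log 2) * (2 * Real.log 2)
              = w * Real.log (1 + c * P₂) := by field_simp
          have e2 : (w / 2) * (Real.log (1 + a * P₁) / Real.log 2) * (2 * Real.log 2)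
              = w * Real.log (1 + a * P₁) := by field_simp
          have e3 : (w / (2 * Real.log 2)) * (2 * Real.log 2) = w := by field_simp
          nlinarith [mul_le_mul_of_nonneg_right hw' (by positivity : (0:ℝ) ≤ 2 * Real.log 2)]
        have := (mul_le_mul_iff_right₀ hw).mp (by linarith : w * Real.log (1 + c * P₂) ≤ w * (Real.log (1 + a * P₁) + 1))
        linarith
      have hpos1 : 0 < 1 + c * P₂ := by positivity
      have hpos2 : 0 < 1 + a * P₁ := by positivity
      have hexp : 1 + c * P₂ ≤ (1 + a * P₁) * Real.exp 1 := by
        calc 1 + c * P₂ = Real.exp (Real.log (1 + c * P₂)) := (Real.exp_log hpos1).symm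
          _ ≤ Real.exp (Real.log (1 + a * P₁) + 1) := Real.exp_le_exp.mpr hlogineq
          _ = (1 + a * P₁) * Real.exp 1 := by rw [Real.exp_add, Real.exp_log hpos2]
      have he : Real.exp 1 < 3 := by
        have := Real.exp_one_lt_d9; linarith
      have hfin : 1 + c * P₂ ≤ 4 + 4 * a * min Ps Pt := by
        have hle : 1 + a * P₁ ≤ 1 + a * min Ps Pt := by
          have := mul_le_mul_of_nonneg_left hP₁' ha.le
          linarith
        have h1 : (1 + a * P₁) * Real.exp 1 ≤ (1 + a * min Ps Pt) * 3 :=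
          mul_le_mul hle he.le (Real.exp_pos 1).le (by positivity)
        have h2 : 0 < a * min Ps Pt := mul_pos ha hm
        linarith
      rw [hcP₂] at hfin
      linarith
  refine ⟨key, ?_⟩
  rw [ge_iff_le, div_le_iff₀ (by positivity)]
  have h4 : w * c ≤ (4 + 4 * a * min Ps Pt) * (α * L) := by
    have := (div_le_iff₀ hαL).mp key
    linarith
  nlinarith
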